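/- Let D and A_FF be real symmetric positive-definite matrices of the same size and ε ≥ 0 a real number such that D ⪯ A_FF ⪯ (1+ε)·D. Set σ = 2/(2+ε). Then the weighted relaxation error-propagation matrix I - σ·D^{-1}A_FF is a contraction in the A_FF-norm with factor ε/(2+ε): for every vector x, ((I - σD^{-1}A_FF)x)^T A_FF ((I - σD^{-1}A_FF)x) ≤ (ε/(2+ε))² · x^T A_FF x. -/

import Mathlib

open Matrix

/-- Weighted relaxation contraction: if `D ⪯ A_FF ⪯ (1+ε) • D` with `D`, `A_FF`
symmetric positive definite and `σ = 2/(2+ε)`, then `I - σ D⁻¹ A_FF` is a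
contraction in the `A_FF`-norm with factor `ε/(2+ε)`. -/
theorem weighted_relaxation_contraction
    {n : Type*} [Fintype n] [DecidableEq n]
    (D A_FF : Matrix n n ℝ) (ε : ℝ) (hε : 0 ≤ ε)
    (hD : D.PosDef) (hA : A_FF.PosDef)
    (hlow : (A_FF - D).PosSemidef)
    (hhigh : ((1 + ε) • D - A_FF).PosSemidef)
    (σ : ℝ) (hσ : σ = 2 / (2 + ε)) :
    ∀ x : n → ℝ,
      ((1 - σ • (D⁻¹ * A_FF)) *ᵥ x) ⬝ᵥ (A_FF *ᵥ ((1 - σ • (D⁻¹ * A_FF)) *ᵥ x))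
        ≤ (ε / (2 + ε)) ^ 2 * (x ⬝ᵥ (A_FF *ᵥ x)) := by
  intro x
  have hAt : A_FFᵀ = A_FF := hA.1.eq
  have hDt : Dᵀ = D := hD.1.eq
  have symdot : ∀ (M : Matrix n n ℝ), Mᵀ = M → ∀ u w : n → ℝ,
      u ⬝ᵥ (M *ᵥ w) = (M *ᵥ u) ⬝ᵥ w := by
    intro M hM u w
    rw [dotProduct_mulVec, ← Matrix.mulVec_transpose, hM]
  set z : n → ℝ := D⁻¹ *ᵥ (A_FF *ᵥ x) with hz
  have hDz : D *ᵥ z = A_FF *ᵥ x := by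
    rw [hz, Matrix.mulVec_mulVec, Matrix.mul_nonsing_inv _ hD.det_pos.ne'.isUnit,
      Matrix.one_mulVec]
  -- the propagated vector
  have hy : ((1 - σ • (D⁻¹ * A_FF)) *ᵥ x) = x - σ • z := by
    rw [Matrix.sub_mulVec, Matrix.one_mulVec, Matrix.smul_mulVec,
      ← Matrix.mulVec_mulVec, hz]
  -- scalar quantities
  set a : ℝ := x ⬝ᵥ (A_FF *ᵥ x) with ha
  set p : ℝ := x ⬝ᵥ (D *ᵥ x) with hp
  set d : ℝ := z ⬝ᵥ (D *ᵥ z) with hd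
  set b : ℝ := z ⬝ᵥ (A_FF *ᵥ z) with hb
  -- cross terms
  have h1 : x ⬝ᵥ (A_FF *ᵥ z) = d := by
    rw [symdot _ hAt, ← hDz, dotProduct_comm]
  have h2 : z ⬝ᵥ (A_FF *ᵥ x) = d := by rw [← hDz]
  have h3 : x ⬝ᵥ (D *ᵥ z) = a := by rw [hDz]
  have h4 : z ⬝ᵥ (D *ᵥ x) = a := by rw [symdot _ hDt, hDz, dotProduct_comm]
  -- constraints
  have qlow : ∀ w : n → ℝ, 0 ≤ w ⬝ᵥ (A_FF *ᵥ w) - w ⬝ᵥ (D *ᵥ w) := by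
    intro w
    have := hlow.dotProduct_mulVec_nonneg w
    simpa [Matrix.sub_mulVec, dotProduct_sub] using this
  have qhigh : ∀ w : n → ℝ, 0 ≤ (1 + ε) * (w ⬝ᵥ (D *ᵥ w)) - w ⬝ᵥ (A_FF *ᵥ w) := by
    intro w
    have := hhigh.dotProduct_mulVec_nonneg w
    simpa [Matrix.sub_mulVec, Matrix.smul_mulVec, dotProduct_sub,
      dotProduct_smul, smul_eq_mul] using this
  have c1 := qlow x
  have c2 := qhigh x
  have c3 := qlow z
  have c4 := qhigh z
  -- at u = z - x
  have c6 := qhigh (z - x)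
  have c6' : 0 ≤ (1 + ε) * (d - 2*a + p) - (b - 2*d + a) := by
    have e1 : (z - x) ⬝ᵥ (D *ᵥ (z - x)) = d - 2*a + p := by
      simp [Matrix.mulVec_sub, dotProduct_sub, sub_dotProduct, h3, h4]
      ring
    have e2 : (z - x) ⬝ᵥ (A_FF *ᵥ (z - x)) = b - 2*d + a := by
      simp [Matrix.mulVec_sub, dotProduct_sub, sub_dotProduct, h1, h2]
      ring
    rw [e1, e2] at c6
    exact c6
  -- at v = (1+ε)•x - z
  have c5 := qlow ((1 + ε) • x - z)
  have c5' : 0 ≤ ((1+ε)^2*a - 2*(1+ε)*d + b) - ((1+ε)^2*p - 2*(1+ε)*a + d) := by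
    have e1 : ((1+ε) • x - z) ⬝ᵥ (A_FF *ᵥ ((1+ε) • x - z))
        = (1+ε)^2*a - 2*(1+ε)*d + b := by
      simp [Matrix.mulVec_sub, Matrix.mulVec_smul, dotProduct_sub, sub_dotProduct,
        dotProduct_smul, smul_dotProduct, smul_eq_mul, h1, h2]
      ring
    have e2 : ((1+ε) • x - z) ⬝ᵥ (D *ᵥ ((1+ε) • x - z))
        = (1+ε)^2*p - 2*(1+ε)*a + d := by
      simp [Matrix.mulVec_sub, Matrix.mulVec_smul, dotProduct_sub, sub_dotProduct,
        dotProduct_smul, smul_dotProduct, smul_eq_mul, h3, h4]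
      ring
    rw [e1, e2] at c5
    exact c5
  -- the key scalar inequality
  have key : (1 + ε) * a + b ≤ (2 + ε) * d := by
    rcases eq_or_lt_of_le hε with hε0 | hεpos
    · subst hε0
      linarith
    · nlinarith [c5', c6', mul_pos hεpos hεpos]
  -- expand the goal
  rw [hy]
  have egoal : (x - σ • z) ⬝ᵥ (A_FF *ᵥ (x - σ • z)) = a - 2*σ*d + σ^2*b := by
    simp [Matrix.mulVec_sub, Matrix.mulVec_smul, dotProduct_sub, sub_dotProduct,
      dotProduct_smul, smul_dotProduct, smul_eq_mul, h1, h2]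
    ring
  rw [egoal, hσ]
  have h2ε : (0:ℝ) < 2 + ε := by linarith
  have hne : (2 + ε) ≠ 0 := h2ε.ne'
  have expand : (ε / (2+ε)) ^ 2 * a - (a - 2*(2/(2+ε))*d + (2/(2+ε))^2*b)
      = (4*((2+ε)*d - ((1+ε)*a + b)))/(2+ε)^2 := by
    field_simp
    ring
  have hnn : 0 ≤ (4*((2+ε)*d - ((1+ε)*a + b)))/(2+ε)^2 :=
    div_nonneg (by linarith) (by positivity)
  linarith [expand, hnn]
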